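/- Let X be a Hausdorff space and let X₁, X₂ be closed subsets of X with X₁ ∪ X₂ = X and X₁ ∩ X₂ compact. Then X is a strong J-space if and only if both X₁ and X₂ (with their subspace topologies) are strong J-spaces and at least one of X₁, X₂ is compact. -/

import Mathlib

/-- A Hausdorff space `X` is a *J-space* if whenever `A`, `B` are closed sets with
`A ∪ B = X` and `A ∩ B` compact, then `A` or `B` is compact. -/
def IsJSpace (X : Type*) [TopologicalSpace X] : Prop :=
  ∀ A B : Set X, IsClosed A → IsClosed B → A ∪ B = Set.univ →
    IsCompact (A ∩ B) → IsCompact A ∨ IsCompact B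

/-- A Hausdorff space `X` is a *strong J-space* if every compact `K ⊆ X` is contained in
a compact `L ⊆ X` with `X \ L` connected (the empty set counting as connected). -/
def IsStrongJSpace (X : Type*) [TopologicalSpace X] : Prop :=
  ∀ K : Set X, IsCompact K → ∃ L : Set X, IsCompact L ∧ K ⊆ L ∧ IsPreconnected Lᶜ

open Set

/-- Splitting lemma: if `A ∪ B = X` with `A, B` closed, `A ∩ B ⊆ L`, and `Lᶜ` is
preconnected, then `A ⊆ L` or `B ⊆ L`. -/
lemma strongJ_split {X : Type*} [TopologicalSpace X] {A B L : Set X}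
    (hA : IsClosed A) (hB : IsClosed B) (hu : A ∪ B = Set.univ)
    (hsub : A ∩ B ⊆ L) (hconn : IsPreconnected Lᶜ) : A ⊆ L ∨ B ⊆ L := by
  by_contra h
  rw [not_or, Set.not_subset, Set.not_subset] at h
  obtain ⟨⟨a, haA, haL⟩, ⟨b, hbB, hbL⟩⟩ := h
  have haB : a ∉ B := fun h => haL (hsub ⟨haA, h⟩)
  have hbA : b ∉ A := fun h => hbL (hsub ⟨h, hbB⟩)
  have hcover : Lᶜ ⊆ Bᶜ ∪ Aᶜ := by
    intro x hx
    by_contra hx'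
    simp only [mem_union, mem_compl_iff, not_or, not_not] at hx'
    exact hx (hsub ⟨hx'.2, hx'.1⟩)
  obtain ⟨x, hxL, hxB, hxA⟩ := hconn Bᶜ Aᶜ hB.isOpen_compl hA.isOpen_compl hcover
    ⟨a, haL, haB⟩ ⟨b, hbL, hbA⟩
  have : x ∈ A ∪ B := hu ▸ mem_univ x
  rcases this with h | h
  · exact hxA h
  · exact hxB h

/-- Forward direction for a subspace: if `X` is a strong J-space and `A ∪ B = X` is a
closed cover with `A ∩ B` compact, then `B` is a strong J-space. -/
lemma strongJ_forward_sub {X : Type*} [TopologicalSpace X] {A B : Set X}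
    (hA : IsClosed A) (hB : IsClosed B) (hu : A ∪ B = Set.univ)
    (hi : IsCompact (A ∩ B)) (hX : IsStrongJSpace X) : IsStrongJSpace B := by
  intro K' hK'
  have hKc : IsCompact ((↑) '' K' : Set X) := hK'.image continuous_subtype_val
  obtain ⟨L, hL, hKL, hconn⟩ := hX (((↑) '' K') ∪ (A ∩ B)) (hKc.union hi)
  have hiL : A ∩ B ⊆ L := (subset_union_right).trans hKL
  rcases strongJ_split hA hB hu hiL hconn with hAL | hBL
  · -- `A ⊆ L`; take `L' = (↑)⁻¹' L`.
    refine ⟨(↑) ⁻¹' L, ?_, ?_, ?_⟩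
    · rw [Topology.IsEmbedding.subtypeVal.isCompact_iff, Subtype.image_preimage_coe]
      exact hL.inter_left hB
    · intro x hx
      exact hKL (Or.inl ⟨x, hx, rfl⟩)
    · have hLB : Lᶜ ⊆ B := by
        intro x hx
        have : x ∈ A ∪ B := hu ▸ mem_univ x
        rcases this with h | h
        · exact absurd (hAL h) hx
        · exact h
      have himg : ((↑) : B → X) '' ((↑) ⁻¹' L)ᶜ = Lᶜ := by
        rw [← preimage_compl, Subtype.image_preimage_coe]
        exact inter_eq_right.mpr hLB
      rw [← Topology.IsInducing.subtypeVal.isPreconnected_image, himg]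
      exact hconn
  · -- `B ⊆ L`, so `B` is compact; take `L' = univ`.
    have hBc : IsCompact B := hL.of_isClosed_subset hB hBL
    refine ⟨univ, ?_, subset_univ _, ?_⟩
    · rw [Topology.IsEmbedding.subtypeVal.isCompact_iff, image_univ, Subtype.range_coe]
      exact hBc
    · rw [compl_univ]
      exact isPreconnected_empty

/-- Backward direction: if `A` is compact and `B` is a strong J-space, then `X` is. -/
lemma strongJ_backward {X : Type*} [TopologicalSpace X] {A B : Set X}
    (hA : IsClosed A) (hB : IsClosed B) (hu : A ∪ B = Set.univ)
    (hi : IsCompact (A ∩ B)) (hAc : IsCompact A) (hBj : IsStrongJSpace B) :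
    IsStrongJSpace X := by
  intro K hK
  set S : Set X := (K ∩ B) ∪ (A ∩ B) with hS
  have hSB : S ⊆ B := union_subset inter_subset_right inter_subset_right
  have hSc : IsCompact S := (hK.inter_right hB).union hi
  have hS'c : IsCompact (((↑) : B → X) ⁻¹' S) := by
    rw [Topology.IsEmbedding.subtypeVal.isCompact_iff, Subtype.image_preimage_coe]
    exact hSc.inter_left hB
  obtain ⟨L', hL', hSL', hconn'⟩ := hBj _ hS'c
  set LB : Set X := (↑) '' L' with hLB
  have hLBc : IsCompact LB := hL'.image continuous_subtype_val
  have hLBB : LB ⊆ B := by rintro x ⟨y, _, rfl⟩; exact y.2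
  refine ⟨A ∪ LB, hAc.union hLBc, ?_, ?_⟩
  · intro x hx
    by_cases hxA : x ∈ A
    · exact Or.inl hxA
    · have hxB : x ∈ B := (hu ▸ mem_univ x : x ∈ A ∪ B).resolve_left hxA
      have hxS : (⟨x, hxB⟩ : B) ∈ ((↑) : B → X) ⁻¹' S := Or.inl ⟨hx, hxB⟩
      exact Or.inr ⟨⟨x, hxB⟩, hSL' hxS, rfl⟩
  · have hcompl : (A ∪ LB)ᶜ = ((↑) : B → X) '' L'ᶜ := by
      ext x
      constructor
      · intro hx
        simp only [compl_union, mem_inter_iff, mem_compl_iff] at hx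
        have hxB : x ∈ B := by
          have h' : x ∈ A ∪ B := hu ▸ mem_univ x
          exact h'.resolve_left hx.1
        refine ⟨⟨x, hxB⟩, ?_, rfl⟩
        intro hmem
        exact hx.2 ⟨⟨x, hxB⟩, hmem, rfl⟩
      · rintro ⟨y, hy, rfl⟩
        simp only [compl_union, mem_inter_iff, mem_compl_iff]
        refine ⟨?_, ?_⟩
        · intro hxA
          exact hy (hSL' (Or.inr ⟨hxA, y.2⟩))
        · rintro ⟨z, hz, hzy⟩
          exact hy (Subtype.ext hzy ▸ hz)
    rw [hcompl]
    exact hconn'.image _ continuous_subtype_val.continuousOn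

/-- If `{X₁, X₂}` is a closed cover of `X` with `X₁ ∩ X₂` compact, then `X` is a strong
J-space iff `X₁` and `X₂` are both strong J-spaces and `X₁` or `X₂` is compact. -/
theorem isStrongJSpace_iff_of_closed_cover {X : Type*} [TopologicalSpace X] [T2Space X]
    (X₁ X₂ : Set X) (h₁ : IsClosed X₁) (h₂ : IsClosed X₂) (hu : X₁ ∪ X₂ = Set.univ)
    (hi : IsCompact (X₁ ∩ X₂)) :
    IsStrongJSpace X ↔
      IsStrongJSpace X₁ ∧ IsStrongJSpace X₂ ∧ (IsCompact X₁ ∨ IsCompact X₂) := by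
  have hu' : X₂ ∪ X₁ = Set.univ := by rw [union_comm]; exact hu
  have hi' : IsCompact (X₂ ∩ X₁) := by rw [inter_comm]; exact hi
  constructor
  · intro hX
    refine ⟨strongJ_forward_sub h₂ h₁ hu' hi' hX, strongJ_forward_sub h₁ h₂ hu hi hX, ?_⟩
    obtain ⟨L, hL, hiL, hconn⟩ := hX _ hi
    rcases strongJ_split h₁ h₂ hu hiL hconn with h | h
    · exact Or.inl (hL.of_isClosed_subset h₁ h)
    · exact Or.inr (hL.of_isClosed_subset h₂ h)
  · rintro ⟨hJ₁, hJ₂, hc | hc⟩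
    · exact strongJ_backward h₁ h₂ hu hi hc hJ₂
    · exact strongJ_backward h₂ h₁ hu' hi' hc hJ₁
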